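/- Let v_ε solve dv_ε = εΔv_ε dt - ε(v_ε + Z_ε)³ dt with v_ε(0) = 0 on 𝕋, where Z_ε ∈ C([0,T]; L^∞). Then for every p ≥ 1 and a ∈ (0,1) there is C = C(p,a) such that for all t ∈ [0,T]: (1/2p)‖v_ε(t)‖_{L^{2p}}^{2p} + ε(1-a) ∫₀ᵗ ‖v_ε(s)‖_{L^{2p+2}}^{2p+2} ds ≤ ε C ∫₀ᵗ ‖Z_ε(s)‖_{L^∞}^{2p+2} ds. -/

import Mathlib

open MeasureTheory Set Filter Topology

private lemma cube_le_cube {x y : ℝ} (h : x ≤ y) : x ^ 3 ≤ y ^ 3 := by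
  nlinarith [sq_nonneg (x + y), sq_nonneg x, sq_nonneg y, sq_nonneg (x - y)]

/-- Comparison of one-sided derivatives at a touching point from the left. -/
private lemma slope_comp {T t₀ d e : ℝ} {φ ψ : ℝ → ℝ}
    (ht0 : 0 < t₀) (htT : t₀ ≤ T)
    (hφ : HasDerivWithinAt φ d (Icc 0 T) t₀)
    (hψ : HasDerivWithinAt ψ e (Icc 0 T) t₀)
    (hlt : ∀ t ∈ Ioo (0:ℝ) t₀, φ t < ψ t)
    (heq : φ t₀ = ψ t₀) : e ≤ d := by
  have hsub : Ioo (0:ℝ) t₀ ⊆ Icc (0:ℝ) T \ {t₀} := fun t ht =>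
    ⟨⟨le_of_lt ht.1, le_trans (le_of_lt ht.2) htT⟩, ne_of_lt ht.2⟩
  have hne : (𝓝[Ioo (0:ℝ) t₀] t₀).NeBot := by
    rw [← mem_closure_iff_nhdsWithin_neBot, closure_Ioo (ne_of_lt ht0)]
    exact ⟨le_of_lt ht0, le_refl _⟩
  have h1 : Tendsto (slope φ t₀) (𝓝[Ioo (0:ℝ) t₀] t₀) (𝓝 d) :=
    (hasDerivWithinAt_iff_tendsto_slope.1 hφ).mono_left (nhdsWithin_mono _ hsub)
  have h2 : Tendsto (slope ψ t₀) (𝓝[Ioo (0:ℝ) t₀] t₀) (𝓝 e) :=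
    (hasDerivWithinAt_iff_tendsto_slope.1 hψ).mono_left (nhdsWithin_mono _ hsub)
  refine le_of_tendsto_of_tendsto h2 h1 ?_
  filter_upwards [self_mem_nhdsWithin] with t ht
  have h3 : φ t - φ t₀ ≤ ψ t - ψ t₀ := by
    have := hlt t ht; rw [heq]; linarith
  have h4 : (t - t₀)⁻¹ ≤ 0 := inv_nonpos.2 (by linarith [ht.2])
  show slope ψ t₀ t ≤ slope φ t₀ t
  rw [slope_def_field, slope_def_field, div_eq_mul_inv, div_eq_mul_inv]
  exact mul_le_mul_of_nonpos_right h3 h4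

/-- At an (interior) global max of a `C²` function the second derivative is `≤ 0`. -/
private lemma secondDeriv_nonpos_of_max {f : ℝ → ℝ} {x₀ : ℝ} (hf : ContDiff ℝ 2 f)
    (hmax : ∀ y, f y ≤ f x₀) : iteratedDeriv 2 f x₀ ≤ 0 := by
  by_contra hcon
  push_neg at hcon
  have hdf : Differentiable ℝ f := hf.differentiable (by norm_num)
  have hg : ContDiff ℝ 1 (deriv f) := by
    have h2 : ContDiff ℝ (1 + 1 : ℕ) f := by exact_mod_cast hf
    exact (contDiff_succ_iff_deriv.1 (by exact_mod_cast h2)).2.2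
  have hgc : Continuous (deriv f) := hg.continuous
  have hg0 : deriv f x₀ = 0 :=
    IsLocalMax.deriv_eq_zero (Filter.Eventually.of_forall hmax)
  have hit : iteratedDeriv 2 f x₀ = deriv (deriv f) x₀ := by
    rw [iteratedDeriv_succ, iteratedDeriv_one]
  rw [hit] at hcon
  have hgd : HasDerivAt (deriv f) (deriv (deriv f) x₀) x₀ :=
    ((hg.differentiable (by norm_num)) x₀).hasDerivAt
  have hslope : Tendsto (slope (deriv f) x₀) (𝓝[>] x₀) (𝓝 (deriv (deriv f) x₀)) :=
    (hasDerivAt_iff_tendsto_slope.1 hgd).mono_left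
      (nhdsWithin_mono _ fun y hy => ne_of_gt hy)
  have hev : ∀ᶠ y in 𝓝[>] x₀, 0 < slope (deriv f) x₀ y :=
    hslope.eventually (eventually_gt_nhds hcon)
  have hev2 : ∀ᶠ y in 𝓝[>] x₀, 0 < deriv f y := by
    filter_upwards [hev, self_mem_nhdsWithin] with y hy hy'
    rw [slope_def_field, hg0, sub_zero] at hy
    have hyx : 0 < y - x₀ := by exact sub_pos.2 hy'
    have := mul_pos hy hyx
    rwa [div_mul_cancel₀ _ (ne_of_gt hyx)] at this
  obtain ⟨u, hu, huo⟩ := mem_nhdsGT_iff_exists_Ioo_subset.1 hev2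
  set y := (x₀ + u) / 2 with hy
  have hxy : x₀ < y := by rw [hy]; rw [mem_Ioi] at hu; linarith
  have hyu : y < u := by rw [hy]; rw [mem_Ioi] at hu; linarith
  have hpos : ∀ z ∈ Ioo x₀ y, 0 < deriv f z := fun z hz =>
    huo ⟨hz.1, lt_trans hz.2 hyu⟩
  have hftc : ∫ z in x₀..y, deriv f z = f y - f x₀ :=
    intervalIntegral.integral_deriv_eq_sub (fun z _ => hdf z)
      (hgc.intervalIntegrable _ _)
  have hint : 0 < ∫ z in x₀..y, deriv f z :=
    intervalIntegral.intervalIntegral_pos_of_pos_on (hgc.intervalIntegrable _ _) hpos hxy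
  rw [hftc] at hint
  exact absurd (hmax y) (by linarith)

private lemma youngA {a : ℝ} (ha0 : 0 < a) (ha1 : a < 1) {u n : ℝ} (hu : 0 ≤ u) (hn : 0 ≤ n) :
    -(u - n)^3 ≤ -(1 - a/2) * u^3 + (108/a^2 + 1) * n^3 := by
  have key : 3*u^2*n ≤ a/2*u^3 + 108/a^2*n^3 := by
    have ha2 : (0:ℝ) < a^2 := by positivity
    rcases le_or_gt u (6/a*n) with h | h
    · have h1 : a*u ≤ 6*n := by
        have := mul_le_mul_of_nonneg_left h (le_of_lt ha0)
        calc a*u ≤ a*(6/a*n) := this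
          _ = 6*n := by field_simp
      have h2 : (a*u)^2 ≤ (6*n)^2 := by
        apply sq_le_sq' _ h1
        nlinarith [mul_nonneg ha0.le hu]
      have h3 : a^2*(3*u^2*n) ≤ 108*n^3 := by nlinarith
      have h4 : a^2*(a/2*u^3 + 108/a^2*n^3) = a^3/2*u^3 + 108*n^3 := by
        field_simp
      have h5 : a^2*(3*u^2*n) ≤ a^2*(a/2*u^3 + 108/a^2*n^3) := by
        rw [h4]; nlinarith [pow_nonneg hu 3, pow_nonneg ha0.le 3]
      exact le_of_mul_le_mul_left h5 ha2
    · have h1 : 6*n ≤ a*u := by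
        have := mul_le_mul_of_nonneg_left h.le (le_of_lt ha0)
        calc 6*n = a*(6/a*n) := by field_simp
          _ ≤ a*u := this
      have h2 : u^2*(6*n) ≤ u^2*(a*u) := mul_le_mul_of_nonneg_left h1 (sq_nonneg u)
      have h9 : (0:ℝ) ≤ 108/a^2*n^3 := by positivity
      nlinarith
  nlinarith [mul_nonneg (mul_nonneg hu hn) hn, pow_nonneg hn 3]

private lemma youngB {θ K : ℝ} (hθ : 0 < θ) (hK : 0 < K) (q : ℕ) :
    ∃ C > (0:ℝ), ∀ u n : ℝ, 0 ≤ u → 0 ≤ n →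
      K * n^3 * u^q ≤ θ * u^(q+3) + C * n^(q+3) := by
  set M : ℝ := 2*K/θ + 1 with hM
  have hM0 : 0 < 2*K/θ := by positivity
  have hM1 : 1 ≤ M := by rw [hM]; linarith
  have hMpos : 0 < M := lt_of_lt_of_le one_pos hM1
  refine ⟨K * M^q + 1, by positivity, fun u n hu hn => ?_⟩
  rcases le_or_gt u (M*n) with h | h
  · have h1 : u^q ≤ (M*n)^q := pow_le_pow_left₀ hu h q
    have h2 : K*n^3*u^q ≤ K*n^3*((M*n)^q) :=
      mul_le_mul_of_nonneg_left h1 (by positivity)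
    have h3 : K*n^3*((M*n)^q) = K*M^q * n^(q+3) := by
      rw [mul_pow, pow_add]; ring
    have h4 : (0:ℝ) ≤ θ*u^(q+3) + 1*n^(q+3) := by positivity
    calc K*n^3*u^q ≤ K*M^q*n^(q+3) := by rw [← h3]; exact h2
      _ ≤ θ*u^(q+3) + (K*M^q+1)*n^(q+3) := by nlinarith [pow_nonneg hn (q+3)]
  · have hnu : n*M ≤ u := by rw [mul_comm]; exact h.le
    have h3 : (n*M)^3 ≤ u^3 := pow_le_pow_left₀ (by positivity) hnu 3
    have hM3 : M ≤ M^3 := by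
      nlinarith [mul_nonneg (mul_nonneg hMpos.le (sub_nonneg.2 hM1))
        (by linarith : (0:ℝ) ≤ M + 1)]
    have hKn : K*n^3 ≤ θ*u^3 := by
      have c1 : θ*(n^3*M^3) ≤ θ*u^3 := by
        apply mul_le_mul_of_nonneg_left _ hθ.le
        calc n^3*M^3 = (n*M)^3 := by ring
          _ ≤ u^3 := h3
      have c2 : θ*(n^3*M) ≤ θ*(n^3*M^3) := by
        apply mul_le_mul_of_nonneg_left _ hθ.le
        exact mul_le_mul_of_nonneg_left hM3 (by positivity)
      have c3 : θ*M ≥ 2*K := by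
        have hθM : θ*M = 2*K + θ := by rw [hM]; field_simp
        linarith
      have c4 : K*n^3 ≤ θ*(n^3*M) := by nlinarith [pow_nonneg hn 3]
      linarith
    have h5 : K*n^3*u^q ≤ θ*u^3*u^q :=
      mul_le_mul_of_nonneg_right hKn (pow_nonneg hu q)
    have h6 : θ*u^3*u^q = θ*u^(q+3) := by rw [pow_add]; ring
    have h7 : (0:ℝ) ≤ (K*M^q+1)*n^(q+3) := by positivity
    linarith [h5, h6 ▸ h5]

/-- Maximum principle / comparison lemma. -/
private lemma comparison_lemma
    {ε T : ℝ} (hε : 0 < ε) (hT : 0 < T) (v Z : ℝ → ℝ → ℝ) (NN U U' : ℝ → ℝ)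
    (hvc : Continuous (Function.uncurry v))
    (hvper : ∀ t x, v t (x + 2) = v t x)
    (hvC2 : ∀ t, ContDiff ℝ 2 (v t))
    (hv0 : ∀ x, v 0 x = 0)
    (hpde : ∀ t ∈ Icc (0:ℝ) T, ∀ x : ℝ,
        HasDerivAt (fun τ => v τ x)
          (ε * iteratedDeriv 2 (v t) x - ε * (v t x + Z t x) ^ 3) t)
    (hZN : ∀ t ∈ Icc (0:ℝ) T, ∀ x, -(NN t) ≤ Z t x)
    (hU : ∀ t ∈ Icc (0:ℝ) T, HasDerivWithinAt U (U' t) (Icc (0:ℝ) T) t)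
    (hU0 : 0 < U 0)
    (hcomp : ∀ t ∈ Icc (0:ℝ) T, -(ε * (U t - NN t)^3) < U' t) :
    ∀ t ∈ Icc (0:ℝ) T, ∀ x, v t x < U t := by
  by_contra hcon
  push_neg at hcon
  obtain ⟨t₁, ht₁, x₁, hx₁⟩ := hcon
  have hUc : ContinuousOn U (Icc 0 T) := fun s hs => (hU s hs).continuousWithinAt
  set W : ℝ → ℝ := fun s => U (max 0 (min T s)) with hWdef
  have hWc : Continuous W := by
    apply hUc.comp_continuous (continuous_const.max (continuous_const.min continuous_id))
    intro s
    exact ⟨le_max_left _ _, max_le hT.le (min_le_left _ _)⟩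
  have hWU : ∀ s ∈ Icc (0:ℝ) T, W s = U s := by
    intro s hs
    simp only [hWdef]
    rw [min_eq_right hs.2, max_eq_right hs.1]
  have hper : ∀ s, Function.Periodic (v s) 2 := fun s x => hvper s x
  set S : Set (ℝ × ℝ) :=
    (Icc (0:ℝ) T ×ˢ Icc (0:ℝ) 2) ∩ {q | W q.1 ≤ v q.1 q.2} with hSdef
  have hScpt : IsCompact S := by
    apply (isCompact_Icc.prod isCompact_Icc).inter_right
    exact isClosed_le (hWc.comp continuous_fst) hvc
  obtain ⟨x₂, hx₂, hx₂eq⟩ := (hper t₁).exists_mem_Ico₀ two_pos x₁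
  have hSne : S.Nonempty := by
    refine ⟨(t₁, x₂), ⟨ht₁, Ico_subset_Icc_self hx₂⟩, ?_⟩
    show W t₁ ≤ v t₁ x₂
    rw [hWU t₁ ht₁, ← hx₂eq]
    exact hx₁
  set A : Set ℝ := Prod.fst '' S with hAdef
  have hAcpt : IsCompact A := hScpt.image continuous_fst
  have hAne : A.Nonempty := hSne.image _
  set t₀ : ℝ := sInf A with ht₀def
  have ht₀A : t₀ ∈ A := hAcpt.sInf_mem hAne
  obtain ⟨q₀, hq₀S, hq₀eq⟩ := ht₀A
  obtain ⟨⟨ht₀Icc, hx₀Icc⟩, hWv₀⟩ := hq₀S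
  rw [hq₀eq] at ht₀Icc
  set x₀ : ℝ := q₀.2 with hx₀def
  have hWv₀' : W t₀ ≤ v t₀ x₀ := by rw [← hq₀eq]; exact hWv₀
  have hmin : ∀ s ∈ Icc (0:ℝ) T, s < t₀ → ∀ x ∈ Icc (0:ℝ) 2, v s x < U s := by
    intro s hs hst x hx
    by_contra hle
    push_neg at hle
    have : (s, x) ∈ S := ⟨⟨hs, hx⟩, by show W s ≤ v s x; rw [hWU s hs]; exact hle⟩
    have : s ∈ A := ⟨(s, x), this, rfl⟩
    exact absurd (csInf_le hAcpt.bddBelow this) (not_le.2 hst)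
  have hmin' : ∀ s ∈ Icc (0:ℝ) T, s < t₀ → ∀ x, v s x < U s := by
    intro s hs hst x
    obtain ⟨y, hy, hyeq⟩ := (hper s).exists_mem_Ico₀ two_pos x
    rw [hyeq]
    exact hmin s hs hst y (Ico_subset_Icc_self hy)
  have ht₀pos : 0 < t₀ := by
    rcases eq_or_lt_of_le ht₀Icc.1 with h | h
    · exfalso
      have : W t₀ ≤ v t₀ x₀ := hWv₀'
      rw [← h] at this ht₀Icc
      rw [hv0 x₀, hWU 0 ht₀Icc] at this
      exact absurd this (not_le.2 hU0)
    · exact h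
  have hle : ∀ x ∈ Icc (0:ℝ) 2, v t₀ x ≤ U t₀ := by
    intro x hx
    have hFc : Continuous (fun s => v s x - W s) := by
      have : Continuous (fun s => v s x) := by
        have := hvc.comp (continuous_id.prodMk (continuous_const (y := x)))
        exact this
      exact this.sub hWc
    have hne : (𝓝[Ioo (0:ℝ) t₀] t₀).NeBot := by
      rw [← mem_closure_iff_nhdsWithin_neBot, closure_Ioo (ne_of_lt ht₀pos)]
      exact ⟨ht₀pos.le, le_refl _⟩
    have htend : Tendsto (fun s => v s x - W s) (𝓝[Ioo (0:ℝ) t₀] t₀)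
        (𝓝 (v t₀ x - W t₀)) := (hFc.tendsto t₀).mono_left nhdsWithin_le_nhds
    have hev : ∀ᶠ s in 𝓝[Ioo (0:ℝ) t₀] t₀, v s x - W s ≤ 0 := by
      filter_upwards [self_mem_nhdsWithin] with s hs
      have hsIcc : s ∈ Icc (0:ℝ) T := ⟨hs.1.le, hs.2.le.trans ht₀Icc.2⟩
      have := hmin s hsIcc hs.2 x hx
      rw [hWU s hsIcc]
      linarith
    have := le_of_tendsto htend hev
    rw [hWU t₀ ht₀Icc] at this
    linarith
  have hle' : ∀ x, v t₀ x ≤ U t₀ := by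
    intro x
    obtain ⟨y, hy, hyeq⟩ := (hper t₀).exists_mem_Ico₀ two_pos x
    rw [hyeq]
    exact hle y (Ico_subset_Icc_self hy)
  have heqU : v t₀ x₀ = U t₀ := by
    refine le_antisymm (hle' x₀) ?_
    rw [← hWU t₀ ht₀Icc]
    exact hWv₀'
  have hmaxx : ∀ y, v t₀ y ≤ v t₀ x₀ := fun y => (hle' y).trans heqU.ge
  have hvxx : iteratedDeriv 2 (v t₀) x₀ ≤ 0 :=
    secondDeriv_nonpos_of_max (hvC2 t₀) hmaxx
  have hD : HasDerivAt (fun τ => v τ x₀)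
      (ε * iteratedDeriv 2 (v t₀) x₀ - ε * (v t₀ x₀ + Z t₀ x₀) ^ 3) t₀ :=
    hpde t₀ ht₀Icc x₀
  have hUD : U' t₀ ≤ ε * iteratedDeriv 2 (v t₀) x₀ - ε * (v t₀ x₀ + Z t₀ x₀) ^ 3 := by
    refine slope_comp ht₀pos ht₀Icc.2 (hD.hasDerivWithinAt) (hU t₀ ht₀Icc) ?_ heqU
    intro s hs
    exact hmin' s ⟨hs.1.le, hs.2.le.trans ht₀Icc.2⟩ hs.2 x₀
  have hcube : (U t₀ - NN t₀)^3 ≤ (v t₀ x₀ + Z t₀ x₀)^3 := by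
    apply cube_le_cube
    have := hZN t₀ ht₀Icc x₀
    rw [heqU]
    linarith
  have h1 : ε * iteratedDeriv 2 (v t₀) x₀ ≤ 0 :=
    mul_nonpos_of_nonneg_of_nonpos hε.le hvxx
  have h2 : ε * (U t₀ - NN t₀)^3 ≤ ε * (v t₀ x₀ + Z t₀ x₀)^3 :=
    mul_le_mul_of_nonneg_left hcube hε.le
  linarith [hcomp t₀ ht₀Icc]

set_option maxHeartbeats 4000000 in
/-- `L^{2p}` energy estimate for the shifted `Φ⁴₁` equation
`dv = εΔv dt - ε(v+Z)³ dt`, `v(0) = 0`, on the torus (period 2): for all `t ∈ [0,T]`,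
`(1/2p)‖v(t)‖_{L^{2p}}^{2p} + ε(1-a)∫₀ᵗ ‖v(s)‖_{L^{2p+2}}^{2p+2} ds
  ≤ εC ∫₀ᵗ ‖Z(s)‖_{L^∞}^{2p+2} ds` with `C = C(p,a)`. -/
theorem shifted_equation_energy_estimate
    (p : ℕ) (hp : 1 ≤ p) (a : ℝ) (ha : a ∈ Set.Ioo (0:ℝ) 1) :
    ∃ C > (0:ℝ), ∀ ε > (0:ℝ), ∀ T > (0:ℝ), ∀ v Z : ℝ → ℝ → ℝ,
      Continuous (Function.uncurry v) →
      Continuous (Function.uncurry Z) →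
      (∀ t x, v t (x + 2) = v t x) →
      (∀ t x, Z t (x + 2) = Z t x) →
      (∀ t, ContDiff ℝ 2 (v t)) →
      (∀ x, v 0 x = 0) →
      (∀ t ∈ Set.Icc (0:ℝ) T, ∀ x : ℝ,
        HasDerivAt (fun τ => v τ x)
          (ε * iteratedDeriv 2 (v t) x - ε * (v t x + Z t x) ^ 3) t) →
      ∀ t ∈ Set.Icc (0:ℝ) T,
        (1 / (2 * (p:ℝ))) * (∫ x in (0:ℝ)..2, v t x ^ (2*p))
            + ε * (1 - a) * ∫ s in (0:ℝ)..t, ∫ x in (0:ℝ)..2, v s x ^ (2*p+2)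
          ≤ ε * C * ∫ s in (0:ℝ)..t,
              (sSup (Set.range fun x => |Z s x|)) ^ (2*p+2) := by
  obtain ⟨ha0, ha1⟩ := ha
  have hppos : (0:ℝ) < p := by exact_mod_cast Nat.pos_of_ne_zero (by omega)
  set K : ℝ := 108/a^2 + 1 with hKdef
  have hKpos : 0 < K := by positivity
  set q : ℕ := 2*p - 1 with hqdef
  have hq3 : q + 3 = 2*p + 2 := by omega
  clear_value K q
  obtain ⟨C₂, hC₂pos, hC₂⟩ := youngB (by linarith : (0:ℝ) < a/2) hKpos q
  have hC₂' : ∀ u n : ℝ, 0 ≤ u → 0 ≤ n →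
      K * n^3 * u^q ≤ a/2 * u^(2*p+2) + C₂ * n^(2*p+2) := by
    intro u n hu hn
    have h0 := hC₂ u n hu hn
    rwa [hq3] at h0
  refine ⟨2*C₂, by linarith, ?_⟩
  intro ε hε T hT v Z hvc hZc hvper hZper hvC2 hv0 hpde t ht
  -- the sup-norm function `NN`
  set NN : ℝ → ℝ := fun s => sSup (Set.range fun x => |Z s x|) with hNNdef
  have hZac : Continuous (fun r : ℝ × ℝ => |Z r.1 r.2|) := by
    have h0 : Continuous (fun r : ℝ × ℝ => Z r.1 r.2) := hZc
    exact h0.abs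
  have hZxc : ∀ s, Continuous (fun x => |Z s x|) := fun s =>
    hZac.comp (continuous_const.prodMk continuous_id)
  have hZperabs : ∀ s, Function.Periodic (fun x => |Z s x|) 2 := by
    intro s x; simp only [hZper s x]
  have hNimage : ∀ s, (Set.range fun x => |Z s x|) = (fun x => |Z s x|) '' Set.Icc 0 2 := by
    intro s
    apply Set.Subset.antisymm
    · rintro y ⟨x, rfl⟩
      obtain ⟨x', hx', hx'eq⟩ := (hZperabs s).exists_mem_Ico₀ two_pos x
      exact ⟨x', Set.Ico_subset_Icc_self hx', hx'eq.symm⟩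
    · rintro y ⟨x, _, rfl⟩
      exact ⟨x, rfl⟩
  have hNN' : NN = fun s => sSup ((fun x => |Z s x|) '' Set.Icc 0 2) := by
    funext s; simp only [hNNdef]; rw [hNimage s]
  have hNc : Continuous NN := by
    rw [hNN']
    exact isCompact_Icc.continuous_sSup hZac
  have hNabs : ∀ s x, |Z s x| ≤ NN s := by
    intro s x
    rw [hNN']
    obtain ⟨x', hx', hx'eq⟩ := (hZperabs s).exists_mem_Ico₀ two_pos x
    rw [hx'eq]
    exact le_csSup (isCompact_Icc.bddAbove_image (hZxc s).continuousOn)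
      ⟨x', Set.Ico_subset_Icc_self hx', rfl⟩
  have hN0 : ∀ s, 0 ≤ NN s := fun s => (abs_nonneg (Z s 0)).trans (hNabs s 0)
  clear_value NN
  -- max of NN on [0,T]
  obtain ⟨sM, hsM, hsMmax⟩ :=
    isCompact_Icc.exists_isMaxOn (Set.nonempty_Icc.2 hT.le) hNc.continuousOn
  set NM : ℝ := NN sM with hNMdef
  have hNM : ∀ s ∈ Set.Icc (0:ℝ) T, NN s ≤ NM := fun s hs => hsMmax hs
  have hNM0 : 0 ≤ NM := hN0 sM
  clear_value NM
  have ha2 : 0 < 1 - a/2 := by linarith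
  set B : ℝ := (K*NM^3 + 1)/(1 - a/2) + 1 with hBdef
  have hBq : 1 < (K*NM^3+1)/(1-a/2) := by
    rw [lt_div_iff₀ ha2]
    have h108 : (0:ℝ) < 108/a^2 := by positivity
    have h9 : 0 ≤ K*NM^3 := mul_nonneg hKpos.le (pow_nonneg hNM0 3)
    linarith
  have hB2 : 2 < B := by rw [hBdef]; linarith
  have hB0 : 0 < B := by linarith
  have hBcube : K*NM^3 + 1 < (1-a/2)*B^3 := by
    have h1 : (K*NM^3+1)/(1-a/2) < B := by rw [hBdef]; linarith
    have h2 : B ≤ B^3 := by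
      nlinarith [mul_nonneg (mul_nonneg hB0.le (by linarith : (0:ℝ) ≤ B - 1))
        (by linarith : (0:ℝ) ≤ B + 1)]
    have h3 : (K*NM^3+1) / (1-a/2) * (1-a/2) = K*NM^3+1 :=
      div_mul_cancel₀ _ (ne_of_gt ha2)
    nlinarith [mul_lt_mul_of_pos_right h1 ha2, mul_le_mul_of_nonneg_left h2 ha2.le]
  clear_value B
  have key : ∀ η : ℝ, 0 < η → η ≤ 1 →
      (1 / (2 * (p:ℝ))) * (∫ x in (0:ℝ)..2, v t x ^ (2*p))
        + ε * (1 - a) * (∫ s in (0:ℝ)..t, ∫ x in (0:ℝ)..2, v s x ^ (2*p+2))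
        ≤ ε * (2*C₂) * (∫ s in (0:ℝ)..t, (NN s)^(2*p+2))
          + η * (1/(p:ℝ) + 2*ε*B^q*T) := by
    intro η hη0 hη1
    -- truncated vector field
    set clamp : ℝ → ℝ := fun u => max (-B) (min B u) with hclampdef
    have hclamp_le : ∀ u, |clamp u| ≤ B := by
      intro u
      rw [abs_le]
      exact ⟨neg_le.1 (neg_le.2 (le_max_left _ _)) |>.trans (le_refl _) |>.trans (le_refl _) |> fun h => h, max_le (by linarith) (min_le_left _ _)⟩
    have hclamp_lip : ∀ u w, |clamp u - clamp w| ≤ |u - w| := by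
      intro u w
      have h0 : clamp u = max (min B u) (-B) := by rw [hclampdef]; simp [max_comm]
      have h0' : clamp w = max (min B w) (-B) := by rw [hclampdef]; simp [max_comm]
      calc |clamp u - clamp w| = |max (min B u) (-B) - max (min B w) (-B)| := by rw [h0, h0']
        _ ≤ |min B u - min B w| := abs_max_sub_max_le_abs _ _ _
        _ ≤ max |B - B| |u - w| := abs_min_sub_min_le_max _ _ _ _
        _ = |u - w| := by simp
    have hclamp_eq : ∀ u, clamp u = max (-B) (min B u) := fun _ => rfl
    have hclamp0 : clamp 0 = 0 := by
      rw [hclamp_eq, min_eq_right hB0.le, max_eq_right (by linarith)]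
    have hclampB : clamp B = B := by
      rw [hclamp_eq, min_self, max_eq_right (by linarith)]
    clear_value clamp
    set f : ℝ → ℝ → ℝ := fun s u => ε * (-(1 - a/2) * (clamp u)^3 + K * (NN s)^3 + η)
      with hfdef
    have hf_eq : ∀ s u, f s u = ε * (-(1 - a/2) * (clamp u)^3 + K * (NN s)^3 + η) :=
      fun _ _ => rfl
    clear_value f
    set Cb : ℝ := ε*(B^3 + K*NM^3 + 1) with hCbdef
    have hCb0 : 0 ≤ Cb := by
      rw [hCbdef]
      have h1 : 0 < B^3 := pow_pos hB0 3
      have h2 : 0 ≤ K*NM^3 := mul_nonneg hKpos.le (pow_nonneg hNM0 3)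
      nlinarith
    clear_value Cb
    set Rad : ℝ := Cb*T + 1 with hRaddef
    clear_value Rad
    set L : NNReal := Real.toNNReal (3*ε*B^2) with hLdef
    have hLcoe : (L:ℝ) = 3*ε*B^2 := Real.coe_toNNReal _ (by positivity)
    clear_value L
    have hlip : ∀ s, LipschitzWith L (f s) := by
      intro s
      apply LipschitzWith.of_dist_le_mul
      intro u w
      rw [Real.dist_eq, Real.dist_eq, hLcoe]
      have h1 := hclamp_lip u w
      have hcu := abs_le.1 (hclamp_le u)
      have hcw := abs_le.1 (hclamp_le w)
      have h2 : |(clamp u)^3 - (clamp w)^3| ≤ 3*B^2*|u - w| := by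
        have he : (clamp u)^3 - (clamp w)^3
            = (clamp u - clamp w)*((clamp u)^2 + clamp u*clamp w + (clamp w)^2) := by ring
        rw [he, abs_mul]
        have hx2 : (clamp u)^2 ≤ B^2 := by nlinarith [hcu.1, hcu.2]
        have hy2 : (clamp w)^2 ≤ B^2 := by nlinarith [hcw.1, hcw.2]
        have hxy : clamp u * clamp w ≤ B^2 := by nlinarith [sq_nonneg (clamp u - clamp w)]
        have h3 : |(clamp u)^2 + clamp u*clamp w + (clamp w)^2| ≤ 3*B^2 := by
          rw [abs_le]
          constructor
          · nlinarith [sq_nonneg (clamp u + clamp w), sq_nonneg (clamp u - clamp w), sq_nonneg B]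
          · nlinarith
        calc |clamp u - clamp w| * |(clamp u)^2 + clamp u*clamp w + (clamp w)^2|
            ≤ |u - w| * (3*B^2) :=
              mul_le_mul h1 h3 (abs_nonneg _) (abs_nonneg _)
          _ = 3*B^2*|u - w| := by ring
      have hfe : f s u - f s w = ε*(1-a/2)*((clamp w)^3 - (clamp u)^3) := by
        rw [hf_eq, hf_eq]; ring
      rw [hfe, abs_mul]
      have h4 : |(clamp w)^3 - (clamp u)^3| ≤ 3*B^2*|u - w| := by
        rw [abs_sub_comm]; exact h2
      have h5 : |ε*(1-a/2)| = ε*(1-a/2) := abs_of_pos (by positivity)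
      rw [h5]
      calc ε*(1-a/2) * |(clamp w)^3 - (clamp u)^3| ≤ ε*(1-a/2)*(3*B^2*|u-w|) :=
            mul_le_mul_of_nonneg_left h4 (by positivity)
        _ ≤ 3*ε*B^2*|u-w| := by
            nlinarith [mul_nonneg (mul_nonneg hε.le (pow_nonneg hB0.le 2)) (abs_nonneg (u-w))]
    have hpl : IsPicardLindelof f (⟨0, le_refl 0, hT.le⟩ : Icc (0:ℝ) T) η (Real.toNNReal Rad) 0
        (Real.toNNReal Cb) L := by
      refine ⟨?_, ?_, ?_, ?_⟩
      · intro s _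
        exact (hlip s).lipschitzOnWith
      · intro x _
        apply Continuous.continuousOn
        simp only [hf_eq]
        exact continuous_const.mul
          ((continuous_const.add (continuous_const.mul (hNc.pow 3))).add continuous_const)
      · intro s hs x _
        rw [Real.coe_toNNReal _ hCb0]
        rw [hf_eq]
        rw [Real.norm_eq_abs, abs_mul, abs_of_pos hε, hCbdef]
        apply mul_le_mul_of_nonneg_left _ hε.le
        have h1 : |(clamp x)^3| ≤ B^3 := by
          rw [abs_pow]
          exact pow_le_pow_left₀ (abs_nonneg _) (hclamp_le x) 3
        have h2 : (NN s)^3 ≤ NM^3 := pow_le_pow_left₀ (hN0 s) (hNM s hs) 3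
        have h3 : 0 ≤ K*(NN s)^3 := mul_nonneg hKpos.le (pow_nonneg (hN0 s) 3)
        have h4 : K*(NN s)^3 ≤ K*NM^3 := mul_le_mul_of_nonneg_left h2 hKpos.le
        have h5 := abs_le.1 h1
        rw [abs_le]
        constructor
        · nlinarith
        · nlinarith
      · show ((Real.toNNReal Cb : NNReal) : ℝ) * max (T - 0) (0 - 0) ≤ ((Real.toNNReal Rad : NNReal) : ℝ) - ((0 : NNReal) : ℝ)
        rw [NNReal.coe_zero, sub_zero, Real.coe_toNNReal _ hCb0, Real.coe_toNNReal _ (by rw [hRaddef]; nlinarith)]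
        rw [sub_zero, sub_zero, max_eq_left hT.le, hRaddef]
        linarith
    obtain ⟨U, hU0eq, hUd⟩ := hpl.exists_eq_forall_mem_Icc_hasDerivWithinAt₀
    have hU0eq : U 0 = η := hU0eq
    have hUc : ContinuousOn U (Icc 0 T) := fun s hs => (hUd s hs).continuousWithinAt
    set W : ℝ → ℝ := fun s => U (max 0 (min T s)) with hWdef
    have hWc : Continuous W := by
      apply hUc.comp_continuous (continuous_const.max (continuous_const.min continuous_id))
      intro s
      exact ⟨le_max_left _ _, max_le hT.le (min_le_left _ _)⟩
    have hWU : ∀ s ∈ Icc (0:ℝ) T, W s = U s := by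
      intro s hs
      simp only [hWdef]
      rw [min_eq_right hs.2, max_eq_right hs.1]
    have hW0 : W 0 = η := by
      rw [hWU 0 ⟨le_refl 0, hT.le⟩]; exact hU0eq
    clear_value W
    -- a priori bounds for U
    have hbound : ∀ s ∈ Icc (0:ℝ) T, 0 < W s ∧ W s < B := by
      intro s₀ hs₀
      by_contra hcon
      have hs₀bad : W s₀ ≤ 0 ∨ B ≤ W s₀ := by
        rw [not_and_or] at hcon
        rcases hcon with h | h
        · exact Or.inl (not_lt.1 h)
        · exact Or.inr (not_lt.1 h)
      set Abad : Set ℝ := Icc 0 T ∩ (W ⁻¹' (Iic 0) ∪ W ⁻¹' (Ici B)) with hAbaddef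
      have hAcl : IsCompact Abad :=
        isCompact_Icc.inter_right ((isClosed_Iic.preimage hWc).union (isClosed_Ici.preimage hWc))
      have hAne : Abad.Nonempty := ⟨s₀, hs₀, by
        rcases hs₀bad with h | h
        · exact Or.inl h
        · exact Or.inr h⟩
      obtain ⟨ht₁Icc, hbad⟩ := hAcl.sInf_mem hAne
      set t₁ : ℝ := sInf Abad with ht₁def
      have ht₁pos : 0 < t₁ := by
        rcases lt_or_eq_of_le ht₁Icc.1 with h | h
        · exact h
        · exfalso
          rw [← h] at hbad
          rcases hbad with hb | hb
          · rw [mem_preimage, mem_Iic, hW0] at hb; linarith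
          · rw [mem_preimage, mem_Ici, hW0] at hb; linarith
      have hbef : ∀ s ∈ Icc (0:ℝ) T, s < t₁ → 0 < W s ∧ W s < B := by
        intro s hs hst
        by_contra hcon2
        rw [not_and_or] at hcon2
        have : s ∈ Abad := by
          refine ⟨hs, ?_⟩
          rcases hcon2 with h | h
          · exact Or.inl (not_lt.1 h)
          · exact Or.inr (not_lt.1 h)
        exact absurd (csInf_le hAcl.bddBelow this) (not_le.2 hst)
      have hne' : (𝓝[Ioo (0:ℝ) t₁] t₁).NeBot := by
        rw [← mem_closure_iff_nhdsWithin_neBot, closure_Ioo (ne_of_lt ht₁pos)]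
        exact ⟨ht₁pos.le, le_refl _⟩
      have htendW : Tendsto W (𝓝[Ioo (0:ℝ) t₁] t₁) (𝓝 (W t₁)) :=
        (hWc.tendsto t₁).mono_left nhdsWithin_le_nhds
      have hIccsub : ∀ s ∈ Ioo (0:ℝ) t₁, s ∈ Icc (0:ℝ) T := fun s hs =>
        ⟨hs.1.le, hs.2.le.trans ht₁Icc.2⟩
      have hWge : 0 ≤ W t₁ := by
        apply ge_of_tendsto htendW
        filter_upwards [self_mem_nhdsWithin] with s hs
        exact (hbef s (hIccsub s hs) hs.2).1.le
      have hWle : W t₁ ≤ B := by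
        apply le_of_tendsto htendW
        filter_upwards [self_mem_nhdsWithin] with s hs
        exact (hbef s (hIccsub s hs) hs.2).2.le
      rcases hbad with hb | hb
      · rw [mem_preimage, mem_Iic] at hb
        have he : U t₁ = 0 := by rw [← hWU t₁ ht₁Icc]; linarith
        have hs2 : f t₁ (U t₁) ≤ 0 := by
          apply slope_comp ht₁pos ht₁Icc.2 (hasDerivWithinAt_const t₁ _ (0:ℝ))
            (hUd t₁ ht₁Icc) ?_ ?_
          · intro s hs
            have h6 := (hbef s (hIccsub s hs) hs.2).1
            rw [hWU s (hIccsub s hs)] at h6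
            exact h6
          · show (0:ℝ) = U t₁
            rw [he]
        rw [he] at hs2
        have hgt : 0 < f t₁ 0 := by
          rw [hf_eq, hclamp0]
          have h7 : 0 ≤ K * (NN t₁)^3 := mul_nonneg hKpos.le (pow_nonneg (hN0 t₁) 3)
          have h8 : (0:ℝ)^3 = 0 := by norm_num
          apply mul_pos hε
          rw [h8]
          nlinarith
        exact absurd hs2 (not_le.2 hgt)
      · rw [mem_preimage, mem_Ici] at hb
        have he : U t₁ = B := by rw [← hWU t₁ ht₁Icc]; linarith
        have hs2 : 0 ≤ f t₁ (U t₁) := by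
          apply slope_comp ht₁pos ht₁Icc.2 (hUd t₁ ht₁Icc)
            (hasDerivWithinAt_const t₁ _ (B:ℝ)) ?_ ?_
          · intro s hs
            have h6 := (hbef s (hIccsub s hs) hs.2).2
            rw [hWU s (hIccsub s hs)] at h6
            exact h6
          · show U t₁ = B
            exact he
        rw [he] at hs2
        have hlt0 : f t₁ B < 0 := by
          rw [hf_eq, hclampB]
          have h5 : (NN t₁)^3 ≤ NM^3 := pow_le_pow_left₀ (hN0 t₁) (hNM t₁ ht₁Icc) 3
          have h6 : K*(NN t₁)^3 ≤ K*NM^3 := mul_le_mul_of_nonneg_left h5 hKpos.le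
          have h7 : -(1 - a/2) * B^3 + K * (NN t₁)^3 + η < 0 := by nlinarith [hBcube]
          exact mul_neg_of_pos_of_neg hε h7
        exact absurd hs2 (not_le.2 hlt0)
    have hboundU : ∀ s ∈ Icc (0:ℝ) T, 0 < U s ∧ U s < B := by
      intro s hs
      rw [← hWU s hs]
      exact hbound s hs
    have hclampU : ∀ s ∈ Icc (0:ℝ) T, clamp (U s) = U s := by
      intro s hs
      obtain ⟨h1, h2⟩ := hboundU s hs
      rw [hclamp_eq, min_eq_right h2.le, max_eq_right (by linarith)]
    have hfU : ∀ s ∈ Icc (0:ℝ) T, f s (U s) = ε*(-(1-a/2)*(U s)^3 + K*(NN s)^3 + η) := by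
      intro s hs
      rw [hf_eq, hclampU s hs]
    have hcompU : ∀ s ∈ Icc (0:ℝ) T, -(ε * (U s - NN s)^3) < f s (U s) := by
      intro s hs
      rw [hfU s hs]
      have hA' : -(U s - NN s)^3 ≤ -(1-a/2)*(U s)^3 + K*(NN s)^3 := by
        rw [hKdef]
        exact youngA ha0 ha1 (hboundU s hs).1.le (hN0 s)
      have h9 : -(U s - NN s)^3 < -(1-a/2)*(U s)^3 + K*(NN s)^3 + η := by linarith
      calc -(ε * (U s - NN s)^3) = ε * (-(U s - NN s)^3) := by ring
        _ < ε*(-(1-a/2)*(U s)^3 + K*(NN s)^3 + η) := mul_lt_mul_of_pos_left h9 hε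
    -- comparison with `v` and `-v`
    have hvlt : ∀ s ∈ Icc (0:ℝ) T, ∀ x, v s x < U s := by
      apply comparison_lemma hε hT v Z NN U (fun s => f s (U s)) hvc hvper hvC2 hv0 hpde
        (fun s hs x => (abs_le.1 (hNabs s x)).1) hUd ?_ hcompU
      rw [hU0eq]; exact hη0
    have hvgt : ∀ s ∈ Icc (0:ℝ) T, ∀ x, -(v s x) < U s := by
      apply comparison_lemma hε hT (fun s x => -(v s x)) (fun s x => -(Z s x)) NN U
        (fun s => f s (U s)) ?_ ?_ ?_ ?_ ?_ ?_ hUd ?_ hcompU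
      · show Continuous fun r : ℝ × ℝ => -(v r.1 r.2)
        exact (hvc :  Continuous fun r : ℝ × ℝ => v r.1 r.2).neg
      · intro s x
        show -(v s (x+2)) = -(v s x)
        rw [hvper]
      · intro s
        exact (hvC2 s).neg
      · intro x
        show -(v 0 x) = 0
        rw [hv0, neg_zero]
      · intro s hs x
        have h0 := (hpde s hs x).neg
        have hit : iteratedDeriv 2 (fun y => -(v s y)) x = -(iteratedDeriv 2 (v s) x) :=
          iteratedDeriv_neg 2 (v s) x
        have heq2 : ε * iteratedDeriv 2 (fun y => -(v s y)) x - ε * (-(v s x) + -(Z s x)) ^ 3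
            = -(ε * iteratedDeriv 2 (v s) x - ε * (v s x + Z s x) ^ 3) := by
          rw [hit]; ring
        rw [heq2]
        exact h0
      · intro s hs x
        exact neg_le_neg (abs_le.1 (hNabs s x)).2
      · rw [hU0eq]; exact hη0
    have habs : ∀ s ∈ Icc (0:ℝ) T, ∀ x, |v s x| ≤ U s := by
      intro s hs x
      rw [abs_le]
      exact ⟨by linarith [hvgt s hs x], (hvlt s hs x).le⟩
    -- energy functional
    set E : ℝ → ℝ := fun τ => (1/(2*(p:ℝ))) * (W τ)^(2*p)
        + ε*(1-a)*(∫ s in (0:ℝ)..τ, (W s)^(2*p+2))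
        - ε*C₂*(∫ s in (0:ℝ)..τ, (NN s)^(2*p+2)) - ε*η*B^q*τ with hEdef
    clear_value E
    have hEc : Continuous E := by
      rw [hEdef]
      apply Continuous.sub
      apply Continuous.sub
      apply Continuous.add
      · exact continuous_const.mul (hWc.pow _)
      · exact continuous_const.mul
          (intervalIntegral.continuous_primitive (fun a b => ((hWc.pow _).intervalIntegrable a b)) 0)
      · exact continuous_const.mul
          (intervalIntegral.continuous_primitive (fun a b => ((hNc.pow _).intervalIntegrable a b)) 0)
      · exact continuous_const.mul continuous_id
    have hEderiv : ∀ τ ∈ Ioo (0:ℝ) T, HasDerivAt E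
        ((W τ)^q * (f τ (U τ)) + ε*(1-a)*(W τ)^(2*p+2)
          - ε*C₂*(NN τ)^(2*p+2) - ε*η*B^q) τ := by
      intro τ hτ
      have hτIcc : τ ∈ Icc (0:ℝ) T := ⟨hτ.1.le, hτ.2.le⟩
      have hmem : Icc (0:ℝ) T ∈ 𝓝 τ := Icc_mem_nhds hτ.1 hτ.2
      have hWUev : W =ᶠ[𝓝 τ] U := by
        filter_upwards [hmem] with s hs
        exact hWU s hs
      have hUdat : HasDerivAt U (f τ (U τ)) τ := (hUd τ hτIcc).hasDerivAt hmem
      have hWdat : HasDerivAt W (f τ (U τ)) τ := hUdat.congr_of_eventuallyEq hWUev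
      have h1 : HasDerivAt (fun τ => (1/(2*(p:ℝ))) * (W τ)^(2*p))
          ((W τ)^q * (f τ (U τ))) τ := by
        have h0 := (hWdat.pow (2*p)).const_mul (1/(2*(p:ℝ)))
        refine h0.congr_deriv (Eq.symm ?_)
        have hqe : 2*p - 1 = q := by omega
        rw [hqe]
        have hp0 : (2*(p:ℝ)) ≠ 0 := by positivity
        push_cast
        field_simp
      have h2 : HasDerivAt (fun τ => ∫ s in (0:ℝ)..τ, (W s)^(2*p+2)) ((W τ)^(2*p+2)) τ :=
        ((hWc.pow (2*p+2)).integral_hasStrictDerivAt 0 τ).hasDerivAt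
      have h3 : HasDerivAt (fun τ => ∫ s in (0:ℝ)..τ, (NN s)^(2*p+2)) ((NN τ)^(2*p+2)) τ :=
        ((hNc.pow (2*p+2)).integral_hasStrictDerivAt 0 τ).hasDerivAt
      have h4 : HasDerivAt (fun τ => ε*η*B^q*τ) (ε*η*B^q) τ := by
        simpa using (hasDerivAt_id τ).const_mul (ε*η*B^q)
      rw [hEdef]
      exact ((h1.add (h2.const_mul _)).sub (h3.const_mul _)).sub h4
    have hE'le : ∀ τ ∈ Ioo (0:ℝ) T,
        (W τ)^q * (f τ (U τ)) + ε*(1-a)*(W τ)^(2*p+2)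
          - ε*C₂*(NN τ)^(2*p+2) - ε*η*B^q ≤ 0 := by
      intro τ hτ
      have hτIcc : τ ∈ Icc (0:ℝ) T := ⟨hτ.1.le, hτ.2.le⟩
      have hWτ := hbound τ hτIcc
      have hWUτ := hWU τ hτIcc
      have hexp : (W τ)^q * (f τ (U τ))
          = ε*(K*(NN τ)^3*(W τ)^q + η*(W τ)^q - (1-a/2)*(W τ)^(2*p+2)) := by
        rw [hfU τ hτIcc, ← hWUτ]
        have hpow : (W τ)^q * (W τ)^3 = (W τ)^(2*p+2) := by rw [← pow_add, hq3]
        calc (W τ)^q * (ε*(-(1-a/2)*(W τ)^3 + K*(NN τ)^3 + η))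
            = ε*(K*(NN τ)^3*(W τ)^q + η*(W τ)^q - (1-a/2)*((W τ)^q*(W τ)^3)) := by ring
          _ = ε*(K*(NN τ)^3*(W τ)^q + η*(W τ)^q - (1-a/2)*(W τ)^(2*p+2)) := by rw [hpow]
      have hY := hC₂' (W τ) (NN τ) hWτ.1.le (hN0 τ)
      have hηW : η*(W τ)^q ≤ η*B^q :=
        mul_le_mul_of_nonneg_left (pow_le_pow_left₀ hWτ.1.le hWτ.2.le q) hη0.le
      have hcore : K*(NN τ)^3*(W τ)^q + η*(W τ)^q - (1-a/2)*(W τ)^(2*p+2)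
          + (1-a)*(W τ)^(2*p+2) - C₂*(NN τ)^(2*p+2) - η*B^q ≤ 0 := by linarith
      have hfinal : (W τ)^q * (f τ (U τ)) + ε*(1-a)*(W τ)^(2*p+2)
          - ε*C₂*(NN τ)^(2*p+2) - ε*η*B^q
          = ε * (K*(NN τ)^3*(W τ)^q + η*(W τ)^q - (1-a/2)*(W τ)^(2*p+2)
              + (1-a)*(W τ)^(2*p+2) - C₂*(NN τ)^(2*p+2) - η*B^q) := by
        rw [hexp]; ring
      rw [hfinal]
      exact mul_nonpos_of_nonneg_of_nonpos hε.le hcore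
    have hEanti : AntitoneOn E (Icc 0 T) := by
      apply antitoneOn_of_deriv_nonpos (convex_Icc 0 T) hEc.continuousOn
      · rw [interior_Icc]
        intro τ hτ
        exact ((hEderiv τ hτ).differentiableAt).differentiableWithinAt
      · rw [interior_Icc]
        intro τ hτ
        rw [(hEderiv τ hτ).deriv]
        exact hE'le τ hτ
      
    have hE0 : E 0 = (1/(2*(p:ℝ))) * η^(2*p) := by
      simp only [hEdef, intervalIntegral.integral_same, hW0]
      ring
    have hEt : E t ≤ (1/(2*(p:ℝ))) * η^(2*p) := by
      rw [← hE0]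
      exact hEanti (left_mem_Icc.2 hT.le) ht ht.1
    have hEexp : (1/(2*(p:ℝ))) * (W t)^(2*p) + ε*(1-a)*(∫ s in (0:ℝ)..t, (W s)^(2*p+2))
        ≤ (1/(2*(p:ℝ)))*η^(2*p) + ε*C₂*(∫ s in (0:ℝ)..t, (NN s)^(2*p+2)) + ε*η*B^q*t := by
      have h0 := hEt
      simp only [hEdef] at h0
      linarith
    -- spatial bounds
    have hvx : ∀ s : ℝ, Continuous (fun x => v s x) :=
      fun s => (hvc : Continuous fun r : ℝ × ℝ => v r.1 r.2).comp
        (continuous_const.prodMk continuous_id)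
    have hsp1 : ∫ x in (0:ℝ)..2, v t x ^ (2*p) ≤ 2 * (W t)^(2*p) := by
      have h1 : ∀ x ∈ Icc (0:ℝ) 2, v t x ^ (2*p) ≤ (W t)^(2*p) := by
        intro x hx
        have h2 := habs t ht x
        rw [← hWU t ht] at h2
        calc v t x ^ (2*p) ≤ |v t x ^ (2*p)| := le_abs_self _
          _ = |v t x| ^ (2*p) := abs_pow _ _
          _ ≤ (W t)^(2*p) := pow_le_pow_left₀ (abs_nonneg _) h2 _
      calc ∫ x in (0:ℝ)..2, v t x ^ (2*p) ≤ ∫ _x in (0:ℝ)..2, (W t)^(2*p) :=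
          intervalIntegral.integral_mono_on (by norm_num)
            (((hvx t).pow _).intervalIntegrable _ _) intervalIntegrable_const h1
        _ = 2 * (W t)^(2*p) := by
            rw [intervalIntegral.integral_const]
            simp [smul_eq_mul]
    have hsp2 : ∀ s ∈ Icc (0:ℝ) t, ∫ x in (0:ℝ)..2, v s x ^ (2*p+2) ≤ 2 * (W s)^(2*p+2) := by
      intro s hs
      have hsIcc : s ∈ Icc (0:ℝ) T := ⟨hs.1, hs.2.trans ht.2⟩
      have h1 : ∀ x ∈ Icc (0:ℝ) 2, v s x ^ (2*p+2) ≤ (W s)^(2*p+2) := by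
        intro x hx
        have h2 := habs s hsIcc x
        rw [← hWU s hsIcc] at h2
        calc v s x ^ (2*p+2) ≤ |v s x ^ (2*p+2)| := le_abs_self _
          _ = |v s x| ^ (2*p+2) := abs_pow _ _
          _ ≤ (W s)^(2*p+2) := pow_le_pow_left₀ (abs_nonneg _) h2 _
      calc ∫ x in (0:ℝ)..2, v s x ^ (2*p+2) ≤ ∫ _x in (0:ℝ)..2, (W s)^(2*p+2) :=
          intervalIntegral.integral_mono_on (by norm_num)
            (((hvx s).pow _).intervalIntegrable _ _) intervalIntegrable_const h1
        _ = 2 * (W s)^(2*p+2) := by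
            rw [intervalIntegral.integral_const]
            simp [smul_eq_mul]
    have hinner_cont : Continuous (fun s => ∫ x in (0:ℝ)..2, v s x ^ (2*p+2)) := by
      apply intervalIntegral.continuous_parametric_intervalIntegral_of_continuous' ?_ 0 2
      show Continuous fun r : ℝ × ℝ => v r.1 r.2 ^ (2*p+2)
      exact (hvc : Continuous fun r : ℝ × ℝ => v r.1 r.2).pow _
    have houter : ∫ s in (0:ℝ)..t, (∫ x in (0:ℝ)..2, v s x ^ (2*p+2))
        ≤ ∫ s in (0:ℝ)..t, 2*(W s)^(2*p+2) :=
      intervalIntegral.integral_mono_on ht.1 (hinner_cont.intervalIntegrable _ _)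
        ((continuous_const.mul (hWc.pow _)).intervalIntegrable _ _) hsp2
    have hfactor : ∫ s in (0:ℝ)..t, 2*(W s)^(2*p+2) = 2*∫ s in (0:ℝ)..t, (W s)^(2*p+2) :=
      intervalIntegral.integral_const_mul 2 _
    have hη2p : η^(2*p) ≤ η := by
      calc η^(2*p) ≤ η^1 := pow_le_pow_of_le_one hη0.le hη1 (by omega)
        _ = η := pow_one η
    have hBqpos : (0:ℝ) < B^q := pow_pos hB0 q
    have e1 : 2*((1/(2*(p:ℝ)))*η^(2*p)) ≤ η*(1/(p:ℝ)) := by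
      have h0 : 2*((1/(2*(p:ℝ)))*η^(2*p)) = η^(2*p)*(1/(p:ℝ)) := by
        field_simp
      rw [h0]
      exact mul_le_mul_of_nonneg_right hη2p (by positivity)
    have e2 : 2*(ε*η*B^q*t) ≤ η*(2*ε*B^q*T) := by
      have h0 : t ≤ T := ht.2
      nlinarith [mul_pos (mul_pos hε hη0) hBqpos]
    calc (1 / (2 * (p:ℝ))) * (∫ x in (0:ℝ)..2, v t x ^ (2*p))
        + ε * (1 - a) * (∫ s in (0:ℝ)..t, ∫ x in (0:ℝ)..2, v s x ^ (2*p+2))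
        ≤ (1/(2*(p:ℝ)))*(2*(W t)^(2*p))
          + ε*(1-a)*(2*∫ s in (0:ℝ)..t, (W s)^(2*p+2)) := by
          apply add_le_add
          · exact mul_le_mul_of_nonneg_left hsp1 (by positivity)
          · apply mul_le_mul_of_nonneg_left _ (by nlinarith : (0:ℝ) ≤ ε*(1-a))
            rw [← hfactor]
            exact houter
      _ = 2*((1/(2*(p:ℝ)))*(W t)^(2*p)
          + ε*(1-a)*(∫ s in (0:ℝ)..t, (W s)^(2*p+2))) := by ring
      _ ≤ 2*((1/(2*(p:ℝ)))*η^(2*p) + ε*C₂*(∫ s in (0:ℝ)..t, (NN s)^(2*p+2))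
          + ε*η*B^q*t) := by linarith
      _ ≤ ε * (2*C₂) * (∫ s in (0:ℝ)..t, (NN s)^(2*p+2)) + η * (1/(p:ℝ) + 2*ε*B^q*T) := by
          linarith
  -- conclusion from `key` by letting `η → 0`
  have hQpos : 0 < 1/(p:ℝ) + 2*ε*B^q*T := by positivity
  set Q : ℝ := 1/(p:ℝ) + 2*ε*B^q*T with hQdef
  have hNgoal : (∫ s in (0:ℝ)..t, (sSup (Set.range fun x => |Z s x|)) ^ (2*p+2))
      = ∫ s in (0:ℝ)..t, (NN s)^(2*p+2) := by
    simp only [hNNdef]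
  rw [hNgoal]
  by_contra hfin
  push_neg at hfin
  set G : ℝ := (1 / (2 * (p:ℝ))) * (∫ x in (0:ℝ)..2, v t x ^ (2*p))
      + ε * (1 - a) * ∫ s in (0:ℝ)..t, ∫ x in (0:ℝ)..2, v s x ^ (2*p+2) with hGdef
  set Rr : ℝ := ε * (2*C₂) * ∫ s in (0:ℝ)..t, (NN s)^(2*p+2) with hRrdef
  clear_value G Rr
  have hδ : 0 < G - Rr := by linarith [hfin]
  set η : ℝ := min 1 ((G - Rr)/(2*Q)) with hηdef
  clear_value Q
  have hη0 : 0 < η := lt_min one_pos (by positivity)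
  have hη1 : η ≤ 1 := min_le_left _ _
  have hηQ : η * Q ≤ (G - Rr)/2 := by
    have h1 : η ≤ (G - Rr)/(2*Q) := min_le_right _ _
    have h2 : η * Q ≤ ((G - Rr)/(2*Q)) * Q :=
      mul_le_mul_of_nonneg_right h1 hQpos.le
    have h3 : ((G - Rr)/(2*Q)) * Q = (G - Rr)/2 := by field_simp
    linarith
  have hk := key η hη0 hη1
  linarith
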